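/- arXiv:1511.05501 — 3 statements merged into one kernel-verified Lean document; each statement's English description precedes it below -/
import Mathlib

section
/- Let A be a finite abelian group, Â its character group over ℂ, H = A × Â, and α((σ,χ),(ρ,ψ)) = χ(ρ) the standard 2-cocycle. Then the twisted group algebra ℂ_α[H] is isomorphic to the matrix algebra M_{|A|}(ℂ); in particular it is a simple ℂ-algebra. -/
/-- The multiplication of the twisted group algebra `k_α[G]`. -/
noncomputable def twistedMul {G : Type*} [Group G] {k : Type*} [Field k]
    (α : G → G → kˣ) (f g : G →₀ k) : G →₀ k :=
  f.sum fun σ a => g.sum fun ρ b => Finsupp.single (σ * ρ) ((α σ ρ : k) * (a * b))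

/-- The standard 2-cocycle `α((σ,χ),(ρ,ψ)) = χ(ρ)` on `H = A × Â`. -/
def stdCocycle (A : Type*) [CommGroup A] :
    (A × (A →* ℂˣ)) → (A × (A →* ℂˣ)) → ℂˣ :=
  fun x y => x.2 y.1

section Aux

set_option linter.unusedSectionVars false

variable {A : Type*} [CommGroup A] [Fintype A] [DecidableEq A]

/-- The matrix attached to a basis element of the twisted group algebra. -/
noncomputable def stdMat (p : A × (A →* ℂˣ)) : Matrix A A ℂ :=
  fun a b => if a = p.1 * b then ((p.2 b : ℂˣ) : ℂ) else 0

lemma stdMat_mul (p q : A × (A →* ℂˣ)) :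
    stdMat p * stdMat q = ((stdCocycle A p q : ℂˣ) : ℂ) • stdMat (p * q) := by
  ext a c
  rw [Matrix.mul_apply, Finset.sum_eq_single (q.1 * c)
    (fun b _ hb => by simp [stdMat, hb]) (fun h => absurd (Finset.mem_univ _) h)]
  by_cases h : a = p.1 * (q.1 * c)
  · simp only [stdMat, stdCocycle, Matrix.smul_apply, smul_eq_mul, Prod.fst_mul, Prod.snd_mul,
      MonoidHom.mul_apply, Units.val_mul, if_pos h, if_pos rfl, map_mul,
      if_pos (show a = p.1 * q.1 * c by rw [h, mul_assoc]), if_true]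
    ring
  · simp only [stdMat, Matrix.smul_apply, smul_eq_mul, Prod.fst_mul, if_neg h,
      if_neg (show ¬a = p.1 * q.1 * c by rwa [mul_assoc]), zero_mul, mul_zero]

lemma stdMat_one : stdMat (1 : A × (A →* ℂˣ)) = 1 := by
  ext a b
  simp [stdMat, Matrix.one_apply]

/-- The forward linear map from the twisted group algebra to matrices. -/
noncomputable def stdLin : ((A × (A →* ℂˣ)) →₀ ℂ) →ₗ[ℂ] Matrix A A ℂ :=
  Finsupp.lsum ℂ fun p => LinearMap.toSpanSingleton ℂ (Matrix A A ℂ) (stdMat p)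

lemma stdLin_single (p : A × (A →* ℂˣ)) (c : ℂ) :
    stdLin (Finsupp.single p c) = c • stdMat p := by
  simp [stdLin]

lemma stdLin_eq (f : (A × (A →* ℂˣ)) →₀ ℂ) :
    stdLin f = f.sum fun p c => c • stdMat p := by
  rfl

lemma stdLin_mul (f g : (A × (A →* ℂˣ)) →₀ ℂ) :
    stdLin (twistedMul (stdCocycle A) f g) = stdLin f * stdLin g := by
  rw [twistedMul, map_finsuppSum]
  simp only [map_finsuppSum, stdLin_single]
  rw [stdLin_eq f, stdLin_eq g, Finsupp.sum_mul]
  refine Finsupp.sum_congr fun p _ => ?_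
  rw [Finsupp.mul_sum]
  refine Finsupp.sum_congr fun q _ => ?_
  rw [smul_mul_smul_comm, stdMat_mul, smul_smul, mul_comm]

noncomputable instance : Fintype (A →* ℂˣ) := by
  have : NeZero (Monoid.exponent A) := ⟨Monoid.exponent_ne_zero_of_finite⟩
  exact Fintype.ofEquiv A
    (CommGroup.monoidHom_mulEquiv_of_hasEnoughRootsOfUnity A ℂ).some.symm.toEquiv

lemma card_characters : Fintype.card (A →* ℂˣ) = Fintype.card A := by
  have : NeZero (Monoid.exponent A) := ⟨Monoid.exponent_ne_zero_of_finite⟩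
  exact Fintype.card_congr
    (CommGroup.monoidHom_mulEquiv_of_hasEnoughRootsOfUnity A ℂ).some.toEquiv

lemma stdLin_apply (f : (A × (A →* ℂˣ)) →₀ ℂ) (σ b : A) :
    stdLin f (σ * b) b = ∑ χ : A →* ℂˣ, f (σ, χ) * ((χ b : ℂˣ) : ℂ) := by
  classical
  rw [stdLin_eq, Finsupp.sum, Matrix.sum_apply,
    Finset.sum_subset (Finset.subset_univ f.support)
      (fun p _ hp => by simp [Finsupp.notMem_support_iff.mp hp]),
    Fintype.sum_prod_type,
    Finset.sum_eq_single σ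
      (fun ρ _ hρ => Finset.sum_eq_zero fun χ _ => by
        have hne : ¬(σ * b = ρ * b) := fun h => hρ (mul_right_cancel h).symm
        simp [stdMat, hne])
      (fun h => absurd (Finset.mem_univ _) h)]
  refine Finset.sum_congr rfl fun χ _ => ?_
  simp [stdMat]

lemma stdLin_injective : Function.Injective (stdLin (A := A)) := by
  rw [← LinearMap.ker_eq_bot, LinearMap.ker_eq_bot']
  intro f hf
  have li : LinearIndependent ℂ
      (fun χ : A →* ℂˣ => ((Units.coeHom ℂ).comp χ : A → ℂ)) := by
    refine (linearIndependent_monoidHom A ℂ).comp _ fun χ ψ h => ?_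
    ext a
    have h2 := DFunLike.congr_fun h a
    simp only [MonoidHom.comp_apply, Units.coeHom_apply] at h2
    exact h2
  ext p
  obtain ⟨σ, χ⟩ := p
  have hsum : ∑ ψ : A →* ℂˣ, f (σ, ψ) • ((Units.coeHom ℂ).comp ψ : A → ℂ) = 0 := by
    funext b
    have h2 := stdLin_apply f σ b
    rw [hf] at h2
    simp only [Matrix.zero_apply] at h2
    simpa [Finset.sum_apply, MonoidHom.comp_apply, smul_eq_mul] using h2.symm
  have := Fintype.linearIndependent_iff.mp li (fun ψ => f (σ, ψ)) hsum χ
  simpa using this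

lemma stdLin_bijective : Function.Bijective (stdLin (A := A)) := by
  refine ⟨stdLin_injective, ?_⟩
  have h : Module.finrank ℂ ((A × (A →* ℂˣ)) →₀ ℂ) = Module.finrank ℂ (Matrix A A ℂ) := by
    rw [Module.finrank_finsupp_self, Module.finrank_matrix, Fintype.card_prod,
      card_characters, Module.finrank_self, mul_one]
  exact (LinearMap.injective_iff_surjective_of_finrank_eq_finrank h).mp stdLin_injective

end Aux

/-- for a finite abelian group `A`, `Â` its character group, `H = A × Â` and
`α` the standard 2-cocycle, the twisted group algebra `ℂ_α[H]` is isomorphic as a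
`ℂ`-algebra to the matrix algebra `M_{|A|}(ℂ)` (matrices indexed by `A`); in particular
it is a simple `ℂ`-algebra. -/
theorem stmt7 {A : Type*} [CommGroup A] [Fintype A] [DecidableEq A] :
    (∃ e : ((A × (A →* ℂˣ)) →₀ ℂ) ≃ₗ[ℂ] Matrix A A ℂ,
      (∀ f g, e (twistedMul (stdCocycle A) f g) = e f * e g) ∧
      e (Finsupp.single 1 1) = 1) ∧
    IsSimpleRing (Matrix A A ℂ) := by
  refine ⟨⟨LinearEquiv.ofBijective stdLin stdLin_bijective, fun f g => stdLin_mul f g, ?_⟩,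
    inferInstance⟩
  show stdLin (Finsupp.single 1 1) = 1
  rw [stdLin_single, one_smul, stdMat_one]
end

section
/- Let C be an additive symmetric monoidal category and O a ⊗-invertible object of C. Then the orbit category C/_{−⊗O}, with the same objects as C and Hom(a,b) := ⊕_{i ∈ ℤ} Hom_C(a, b ⊗ O^{⊗i}), with composition of f = {f_i} and g = {g_i} having i'-th component Σ_i (g_{i'−i} ⊗ O^{⊗i}) ∘ f_i, is a well-defined additive category (composition is associative and admits identities). -/
open CategoryTheory MonoidalCategory
open scoped Classical

noncomputable section

variable {C : Type*} [Category C] [Preadditive C] [MonoidalCategory C]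

/-- Hom groups of the orbit category `C/_{−⊗O}`:
`Hom(a,b) = ⊕_{i ∈ ℤ} Hom_C(a, b ⊗ O^{⊗i})`, where `pow i` denotes `O^{⊗i}`. -/
abbrev OrbitHom (pow : ℤ → C) (a b : C) :=
  Π₀ i : ℤ, (a ⟶ b ⊗ pow i)

/-- Composition in the orbit category: the `i'`-th component of `g ∘ f` is
`Σ_i (g_{i'−i} ⊗ O^{⊗i}) ∘ f_i` (here `μ i j : O^{⊗i} ⊗ O^{⊗j} ≅ O^{⊗(i+j)}`). -/
def orbitComp (pow : ℤ → C) (μ : ∀ i j : ℤ, pow i ⊗ pow j ≅ pow (i + j))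
    {a b c : C} (f : OrbitHom pow a b) (g : OrbitHom pow b c) : OrbitHom pow a c :=
  f.sum fun i fi => g.sum fun j gj =>
    DFinsupp.single (j + i)
      (fi ≫ (gj ▷ pow i) ≫ (α_ c (pow j) (pow i)).hom ≫ (c ◁ (μ j i).hom))

/-- The identity of the orbit category: the identity of `a` concentrated in degree `0`. -/
def orbitId (pow : ℤ → C) (pow0 : pow 0 ≅ 𝟙_ C) (a : C) : OrbitHom pow a a :=
  DFinsupp.single 0 ((ρ_ a).inv ≫ (a ◁ pow0.inv))


section Helpers

variable [MonoidalPreadditive C] (pow : ℤ → C) (μ : ∀ i j : ℤ, pow i ⊗ pow j ≅ pow (i + j))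
variable (pow0 : pow 0 ≅ 𝟙_ C)

abbrev OrbitHom.single (pow : ℤ → C) {a b : C} (i : ℤ) (x : a ⟶ b ⊗ pow i) :
    OrbitHom pow a b := DFinsupp.single i x

set_option linter.unusedSectionVars false

lemma orbit_single_cast {a c : C} {i i' : ℤ} (h : i = i') (x : a ⟶ c ⊗ pow i) :
    (DFinsupp.single i x : OrbitHom pow a c) =
      (DFinsupp.single i' (x ≫ (c ◁ eqToHom (congrArg pow h))) : OrbitHom pow a c) := by
  subst h; simp

lemma orbit_comp_single_single {a b c : C} {i j : ℤ} (x : a ⟶ b ⊗ pow i) (y : b ⟶ c ⊗ pow j) :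
    orbitComp pow μ (OrbitHom.single pow i x) (OrbitHom.single pow j y) =
      OrbitHom.single pow (j + i)
        (x ≫ (y ▷ pow i) ≫ (α_ c (pow j) (pow i)).hom ≫ (c ◁ (μ j i).hom)) := by
  unfold orbitComp OrbitHom.single
  rw [DFinsupp.sum_single_index, DFinsupp.sum_single_index]
  · simp
  · rw [DFinsupp.sum_single_index] <;> simp

lemma orbit_comp_zero_left {a b c : C} (g : OrbitHom pow b c) :
    orbitComp pow μ (0 : OrbitHom pow a b) g = 0 := by
  unfold orbitComp
  rw [DFinsupp.sum_zero_index]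

lemma orbit_comp_zero_right {a b c : C} (f : OrbitHom pow a b) :
    orbitComp pow μ f (0 : OrbitHom pow b c) = 0 := by
  unfold orbitComp
  simp [DFinsupp.sum_zero_index]

lemma orbit_comp_add_left {a b c : C} (f f' : OrbitHom pow a b) (g : OrbitHom pow b c) :
    orbitComp pow μ (f + f') g = orbitComp pow μ f g + orbitComp pow μ f' g := by
  unfold orbitComp
  rw [DFinsupp.sum_add_index]
  · intro i; simp
  · intro i x y
    rw [← DFinsupp.sum_add]
    congr 1; funext j gj
    rw [← DFinsupp.single_add]
    congr 1
    simp [Preadditive.add_comp]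

lemma orbit_comp_add_right {a b c : C} (f : OrbitHom pow a b) (g g' : OrbitHom pow b c) :
    orbitComp pow μ f (g + g') = orbitComp pow μ f g + orbitComp pow μ f g' := by
  unfold orbitComp
  rw [← DFinsupp.sum_add]
  congr 1; funext i fi
  rw [DFinsupp.sum_add_index]
  · intro j; simp
  · intro j x y
    rw [← DFinsupp.single_add]
    congr 1
    simp [MonoidalPreadditive.add_whiskerRight, Preadditive.comp_add, Preadditive.add_comp]

lemma orbit_id_comp
    (hur : ∀ i : ℤ, (μ i 0).hom =
      (pow i ◁ pow0.hom) ≫ (ρ_ (pow i)).hom ≫ eqToHom (by rw [add_zero]))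
    {a b : C} (f : OrbitHom pow a b) :
    orbitComp pow μ (orbitId pow pow0 a) f = f := by
  unfold orbitComp orbitId
  rw [DFinsupp.sum_single_index]
  · conv_rhs => rw [← DFinsupp.sum_single (f := f)]
    congr 1; funext j gj
    rw [orbit_single_cast pow (add_zero j)]
    congr 1
    rw [hur j]
    simp only [Category.assoc, MonoidalCategory.whiskerLeft_comp,
      MonoidalCategory.whiskerLeft_eqToHom, eqToHom_trans, eqToHom_refl, Category.comp_id]
    rw [whisker_exchange_assoc]
    simp [← MonoidalCategory.whiskerLeft_comp]
  · simp

lemma orbit_comp_id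
    (hul : ∀ i : ℤ, (μ 0 i).hom =
      (pow0.hom ▷ pow i) ≫ (λ_ (pow i)).hom ≫ eqToHom (by rw [zero_add]))
    {a b : C} (f : OrbitHom pow a b) :
    orbitComp pow μ f (orbitId pow pow0 b) = f := by
  unfold orbitComp orbitId
  conv_rhs => rw [← DFinsupp.sum_single (f := f)]
  congr 1; funext i fi
  rw [DFinsupp.sum_single_index]
  · rw [orbit_single_cast pow (zero_add i)]
    congr 1
    rw [hul i]
    simp only [MonoidalCategory.comp_whiskerRight, Category.assoc,
      MonoidalCategory.whiskerLeft_comp, MonoidalCategory.whiskerLeft_eqToHom,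
      eqToHom_trans, eqToHom_refl, Category.comp_id]
    rw [associator_naturality_middle_assoc]
    simp [← MonoidalCategory.whiskerLeft_comp]
  · simp

lemma orbit_assoc_single
    (hassoc : ∀ i j l : ℤ,
      ((μ i j).hom ▷ pow l) ≫ (μ (i + j) l).hom =
        (α_ (pow i) (pow j) (pow l)).hom ≫ (pow i ◁ (μ j l).hom) ≫ (μ i (j + l)).hom ≫
          eqToHom (by rw [add_assoc]))
    {a b c d : C} {i j k : ℤ} (x : a ⟶ b ⊗ pow i) (y : b ⟶ c ⊗ pow j) (z : c ⟶ d ⊗ pow k) :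
    orbitComp pow μ (orbitComp pow μ (OrbitHom.single pow i x) (OrbitHom.single pow j y))
        (OrbitHom.single pow k z) =
      orbitComp pow μ (OrbitHom.single pow i x)
        (orbitComp pow μ (OrbitHom.single pow j y) (OrbitHom.single pow k z)) := by
  rw [orbit_comp_single_single, orbit_comp_single_single, orbit_comp_single_single,
    orbit_comp_single_single]
  refine (orbit_single_cast pow (show k + (j + i) = (k + j) + i by ring) _).trans ?_
  congr 1
  simp only [MonoidalCategory.comp_whiskerRight, MonoidalCategory.whiskerLeft_comp,
    Category.assoc, whisker_exchange_assoc]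
  rw [associator_naturality_middle_assoc]
  rw [← MonoidalCategory.whiskerLeft_comp, ← MonoidalCategory.whiskerLeft_comp, hassoc k j i]
  rw [← associator_naturality_left_assoc, associator_naturality_right_assoc]
  simp [pentagon_assoc]

lemma orbit_assoc
    (hassoc : ∀ i j l : ℤ,
      ((μ i j).hom ▷ pow l) ≫ (μ (i + j) l).hom =
        (α_ (pow i) (pow j) (pow l)).hom ≫ (pow i ◁ (μ j l).hom) ≫ (μ i (j + l)).hom ≫
          eqToHom (by rw [add_assoc]))
    {a b c d : C} (f : OrbitHom pow a b) (g : OrbitHom pow b c) (h : OrbitHom pow c d) :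
    orbitComp pow μ (orbitComp pow μ f g) h = orbitComp pow μ f (orbitComp pow μ g h) := by
  induction f using DFinsupp.induction with
  | h0 => simp [orbit_comp_zero_left]
  | ha i x f _ _ ihf =>
    rw [orbit_comp_add_left, orbit_comp_add_left, orbit_comp_add_left, ihf]
    congr 1
    clear ihf
    induction g using DFinsupp.induction with
    | h0 => simp [orbit_comp_zero_left, orbit_comp_zero_right]
    | ha j y g _ _ ihg =>
      rw [orbit_comp_add_left, orbit_comp_add_right, orbit_comp_add_left,
        orbit_comp_add_right, ihg]
      congr 1
      clear ihg
      induction h using DFinsupp.induction with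
      | h0 => simp [orbit_comp_zero_right]
      | ha k z h _ _ ihh =>
        rw [orbit_comp_add_right, orbit_comp_add_right, orbit_comp_add_right, ihh]
        congr 1
        exact orbit_assoc_single pow μ hassoc x y z

end Helpers

/-- for an additive symmetric monoidal category `C` and a ⊗-invertible object
`O` with tensor powers `pow i = O^{⊗i}` (with their canonical coherence isomorphisms), the
orbit category `C/_{−⊗O}` is a well-defined additive category: the composition given by the
formula above is associative, unital, and biadditive. -/
theorem stmt10 [SymmetricCategory C] [MonoidalPreadditive C]
    (O : C) (pow : ℤ → C) (pow0 : pow 0 ≅ 𝟙_ C) (pow1 : pow 1 ≅ O)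
    (μ : ∀ i j : ℤ, pow i ⊗ pow j ≅ pow (i + j))
    (hassoc : ∀ i j l : ℤ,
      ((μ i j).hom ▷ pow l) ≫ (μ (i + j) l).hom =
        (α_ (pow i) (pow j) (pow l)).hom ≫ (pow i ◁ (μ j l).hom) ≫ (μ i (j + l)).hom ≫
          eqToHom (by rw [add_assoc]))
    (hul : ∀ i : ℤ, (μ 0 i).hom =
      (pow0.hom ▷ pow i) ≫ (λ_ (pow i)).hom ≫ eqToHom (by rw [zero_add]))
    (hur : ∀ i : ℤ, (μ i 0).hom =
      (pow i ◁ pow0.hom) ≫ (ρ_ (pow i)).hom ≫ eqToHom (by rw [add_zero])) :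
    (∀ (a b c d : C) (f : OrbitHom pow a b) (g : OrbitHom pow b c) (h : OrbitHom pow c d),
      orbitComp pow μ (orbitComp pow μ f g) h = orbitComp pow μ f (orbitComp pow μ g h)) ∧
    (∀ (a b : C) (f : OrbitHom pow a b), orbitComp pow μ (orbitId pow pow0 a) f = f) ∧
    (∀ (a b : C) (f : OrbitHom pow a b), orbitComp pow μ f (orbitId pow pow0 b) = f) ∧
    (∀ (a b c : C) (f f' : OrbitHom pow a b) (g : OrbitHom pow b c),
      orbitComp pow μ (f + f') g = orbitComp pow μ f g + orbitComp pow μ f' g) ∧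
    (∀ (a b c : C) (f : OrbitHom pow a b) (g g' : OrbitHom pow b c),
      orbitComp pow μ f (g + g') = orbitComp pow μ f g + orbitComp pow μ f g') :=
  ⟨fun _ _ _ _ f g h => orbit_assoc pow μ hassoc f g h,
   fun _ _ f => orbit_id_comp pow μ pow0 hur f,
   fun _ _ f => orbit_comp_id pow μ pow0 hul f,
   fun _ _ _ f f' g => orbit_comp_add_left pow μ f f' g,
   fun _ _ _ f g g' => orbit_comp_add_right pow μ f g g'⟩

end
end

section
/- Let C be an additive symmetric monoidal category in which Hom(L^{⊗p}, L^{⊗q}) ≅ δ_{pq}·ℚ for a fixed object L (Kronecker orthogonality), and suppose M is a direct summand of ⊕_{r=0}^{d} ⊕_{j=1}^{n} L^{⊗r}. Then M is isomorphic to a direct sum of objects of the form L^{⊗r} with multiplicities: M ≅ ⊕_{r=0}^{d} (L^{⊗r})^{⊕ m_r} for some natural numbers m_r. -/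
open CategoryTheory CategoryTheory.Limits

attribute [local instance] CategoryTheory.Limits.hasBinaryBiproducts_of_finite_biproducts

section Stmt18Aux

universe v u

variable {C : Type u} [Category.{v} C] [Preadditive C] [HasFiniteBiproducts C]

/-- An object with zero identity is isomorphic to any empty biproduct. -/
lemma stmt18_zeroIso (M : C) (hM : (𝟙 M : M ⟶ M) = 0) (f : Fin 0 → C) :
    Nonempty (M ≅ ⨁ f) := by
  refine ⟨⟨0, 0, ?_, ?_⟩⟩
  · simp [hM]
  · apply biproduct.hom_ext'
    exact fun j => j.elim0

/-- Peeling off the first summand of a biproduct over `Fin (n+1)`. -/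
noncomputable def stmt18_consIso {n : ℕ} (f : Fin (n + 1) → C) :
    (⨁ f) ≅ f 0 ⊞ ⨁ (fun t : Fin n => f t.succ) where
  hom := biprod.lift (biproduct.π f 0) (biproduct.lift fun t => biproduct.π f t.succ)
  inv := biprod.desc (biproduct.ι f 0) (biproduct.desc fun t => biproduct.ι f t.succ)
  hom_inv_id := by
    rw [biprod.lift_desc, biproduct.lift_desc, ← biproduct.total, Fin.sum_univ_succ]
  inv_hom_id := by
    apply biprod.hom_ext'
    · apply biprod.hom_ext
      · simp
      · apply biproduct.hom_ext
        intro t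
        simp [biproduct.ι_π_ne _ (Fin.succ_ne_zero t).symm]
    · apply biprod.hom_ext
      · apply biproduct.hom_ext'
        intro t
        simp [biproduct.ι_π_ne _ (Fin.succ_ne_zero t)]
      · apply biproduct.hom_ext'
        intro t
        apply biproduct.hom_ext
        intro t'
        by_cases h : t = t'
        · subst h
          simp
        · simp [biproduct.ι_π_ne _ (fun hh => h (Fin.succ_injective _ hh)),
            biproduct.ι_π_ne _ h]

lemma stmt18_aux [IsIdempotentComplete C] (Lpow : ℕ → C)
    (horth : ∀ p q : ℕ, p ≠ q → ∀ f : Lpow p ⟶ Lpow q, f = 0)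
    (hend : ∀ p : ℕ, Nonempty (End (Lpow p) ≃+* ℚ)) :
    ∀ (N : ℕ) (ι : Type) [Fintype ι] (_ : Fintype.card ι = N) (a : ι → ℕ)
      (M : C) (I : M ⟶ ⨁ fun k => Lpow (a k)) (P : (⨁ fun k => Lpow (a k)) ⟶ M)
      (_ : I ≫ P = 𝟙 M),
      ∃ (κ : ℕ) (b : Fin κ → ℕ), (∀ t, ∃ k, b t = a k) ∧
        Nonempty (M ≅ ⨁ fun t => Lpow (b t)) := by
  intro N
  induction N with
  | zero =>
    intro ι _ hcard a M I P hIP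
    haveI : IsEmpty ι := Fintype.card_eq_zero_iff.mp hcard
    have hM : (𝟙 M : M ⟶ M) = 0 := by
      have h1 : (𝟙 (⨁ fun k => Lpow (a k)) : _) = 0 := by
        rw [← biproduct.total]
        simp [Finset.univ_eq_empty]
      calc (𝟙 M : M ⟶ M) = I ≫ P := hIP.symm
        _ = I ≫ 𝟙 _ ≫ P := by simp
        _ = 0 := by rw [h1]; simp
    exact ⟨0, Fin.elim0, fun t => t.elim0, stmt18_zeroIso M hM _⟩
  | succ N IH =>
    intro ι _ hcard a M I P hIP
    classical
    by_cases he : P ≫ I = 0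
    · have hM : (𝟙 M : M ⟶ M) = 0 := by
        calc (𝟙 M : M ⟶ M) = (I ≫ P) ≫ (I ≫ P) := by rw [hIP]; simp
          _ = I ≫ (P ≫ I) ≫ P := by simp
          _ = 0 := by rw [he]; simp
      exact ⟨0, Fin.elim0, fun t => t.elim0, stmt18_zeroIso M hM _⟩
    · -- find a nonzero component of the idempotent `P ≫ I`
      obtain ⟨j, k, hjk⟩ :
          ∃ j k, biproduct.ι (fun k => Lpow (a k)) j ≫ (P ≫ I) ≫
            biproduct.π (fun k => Lpow (a k)) k ≠ 0 := by
        by_contra hcon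
        push_neg at hcon
        apply he
        apply biproduct.hom_ext'
        intro j
        apply biproduct.hom_ext
        intro k
        simpa using hcon j k
      have hajk : a j = a k := by
        by_contra hne
        exact hjk (horth _ _ hne _)
      set g : Lpow (a j) ⟶ Lpow (a k) :=
        biproduct.ι (fun k => Lpow (a k)) j ≫ (P ≫ I) ≫
          biproduct.π (fun k => Lpow (a k)) k with hg
      set c : Lpow (a k) ⟶ Lpow (a j) := eqToHom (by rw [hajk]) with hc
      set g' : End (Lpow (a j)) := g ≫ c with hg'
      have hg'ne : g' ≠ 0 := by
        intro h
        apply hjk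
        have := congrArg (fun z => z ≫ inv c) h
        simpa [hg'] using this
      obtain ⟨φ⟩ := hend (a j)
      have hφ : φ g' ≠ 0 := by
        intro h
        apply hg'ne
        have := congrArg φ.symm h
        simpa using this
      set u : End (Lpow (a j)) := φ.symm ((φ g')⁻¹) with hu
      have hmul1 : u * g' = 1 := by
        apply φ.injective
        rw [map_mul, map_one, hu, RingEquiv.apply_symm_apply, inv_mul_cancel₀ hφ]
      have hmul2 : g' * u = 1 := by
        apply φ.injective
        rw [map_mul, map_one, hu, RingEquiv.apply_symm_apply, mul_inv_cancel₀ hφ]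
      have hgu : g' ≫ u = 𝟙 (Lpow (a j)) := hmul1
      have hug : u ≫ g' = 𝟙 (Lpow (a j)) := hmul2
      haveI : IsIso u := ⟨g', hug, hgu⟩
      -- the split summand
      set α : Lpow (a j) ⟶ M := biproduct.ι (fun k => Lpow (a k)) j ≫ P with hα
      set β : M ⟶ Lpow (a j) :=
        I ≫ biproduct.π (fun k => Lpow (a k)) k ≫ c ≫ u with hβ
      have hαβ : α ≫ β = 𝟙 (Lpow (a j)) := by
        have h1 : α ≫ β = g' ≫ u := by
          simp only [hα, hβ, hg', hg, Category.assoc]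
        rw [h1, hgu]
      have hba : (β ≫ α) ≫ β ≫ α = β ≫ α := by
        rw [Category.assoc, ← Category.assoc α β α, hαβ, Category.id_comp]
      set q : M ⟶ M := 𝟙 M - β ≫ α with hqdef
      have hq : q ≫ q = q := by
        simp only [hqdef, Preadditive.sub_comp, Preadditive.comp_sub, Category.id_comp,
          Category.comp_id, hba]
        abel
      obtain ⟨M', s, t, hst, hts⟩ := IsIdempotentComplete.idempotents_split M q hq
      have hsq : s ≫ q = s := by rw [← hts, ← Category.assoc, hst, Category.id_comp]
      have hqt : q ≫ t = t := by rw [← hts, Category.assoc, hst, Category.comp_id]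
      have hqβ : q ≫ β = 0 := by
        simp [hqdef, Preadditive.sub_comp, Category.assoc, hαβ]
      have hαq : α ≫ q = 0 := by
        simp only [hqdef, Preadditive.comp_sub, Category.comp_id, ← Category.assoc, hαβ]
        simp
      have hsβ : s ≫ β = 0 := by rw [← hsq, Category.assoc, hqβ, comp_zero]
      have hαt : α ≫ t = 0 := by rw [← hqt, ← Category.assoc, hαq, zero_comp]
      have hsIπk : s ≫ I ≫ biproduct.π (fun k => Lpow (a k)) k = 0 := by
        have h1 : (s ≫ I ≫ biproduct.π (fun k => Lpow (a k)) k) ≫ (c ≫ u) = 0 := by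
          simpa [hβ, Category.assoc] using hsβ
        haveI : IsIso (c ≫ u) := inferInstance
        rw [← cancel_mono (c ≫ u), zero_comp, h1]
      have hsIπk' : ∀ {Z : C} (h : Lpow (a k) ⟶ Z),
          s ≫ I ≫ biproduct.π (fun k => Lpow (a k)) k ≫ h = 0 := by
        intro Z h
        rw [show s ≫ I ≫ biproduct.π (fun k => Lpow (a k)) k ≫ h =
          (s ≫ I ≫ biproduct.π (fun k => Lpow (a k)) k) ≫ h by simp [Category.assoc],
          hsIπk, zero_comp]
      -- M' is a summand of the smaller biproduct
      set ι' := {l : ι // l ≠ k} with hι'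
      have hcard' : Fintype.card ι' = N := by
        have h1 : Fintype.card {l : ι // ¬ l = k} = Fintype.card ι - 1 := by
          rw [Fintype.card_subtype_compl, Fintype.card_subtype_eq]
        have h2 : Fintype.card ι' = Fintype.card {l : ι // ¬ l = k} := rfl
        omega
      set J : M' ⟶ ⨁ fun l : ι' => Lpow (a l.1) :=
        biproduct.lift (fun l => s ≫ I ≫ biproduct.π (fun k => Lpow (a k)) l.1) with hJ
      set Q : (⨁ fun l : ι' => Lpow (a l.1)) ⟶ M' :=
        biproduct.desc (fun l => biproduct.ι (fun k => Lpow (a k)) l.1 ≫ P ≫ t) with hQ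
      have hJQ : J ≫ Q = 𝟙 M' := by
        rw [hJ, hQ, biproduct.lift_desc]
        set F : ι → (M' ⟶ M') := fun l =>
          (s ≫ I ≫ biproduct.π (fun k => Lpow (a k)) l) ≫
            (biproduct.ι (fun k => Lpow (a k)) l ≫ P ≫ t) with hF
        have hsum : ∑ l : ι, F l = 𝟙 M' := by
          have h1 : ∑ l : ι, F l =
              s ≫ I ≫ (∑ l : ι, biproduct.π (fun k => Lpow (a k)) l ≫
                biproduct.ι (fun k => Lpow (a k)) l) ≫ P ≫ t := by
            simp only [hF, Preadditive.sum_comp, Preadditive.comp_sum, Category.assoc]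
          rw [h1, biproduct.total, Category.id_comp, ← Category.assoc I P, hIP,
            Category.id_comp, hst]
        have hFk : F k = 0 := by
          rw [hF]
          simp only [Category.assoc]
          exact hsIπk' _
        have hsplit : ∑ l : ι, F l = F k + ∑ l : ι', F l.1 := by
          rw [Fintype.sum_eq_add_sum_compl k F]
          congr 1
          rw [Finset.sum_subtype (p := fun l => l ≠ k) ({k}ᶜ : Finset ι) (by simp) F]
        have : ∑ l : ι', F l.1 = 𝟙 M' := by
          rw [← hsum, hsplit, hFk, zero_add]
        rw [← this]
      obtain ⟨κ', b', hb', ⟨ψ⟩⟩ := IH ι' hcard' (fun l => a l.1) M' J Q hJQ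
      set bb : Fin (κ' + 1) → ℕ := Fin.cons (a j) b' with hbb
      refine ⟨κ' + 1, bb, ?_, ?_⟩
      · intro tt
        refine Fin.cases ?_ (fun t' => ?_) tt
        · exact ⟨j, by simp [hbb]⟩
        · obtain ⟨kk, hkk⟩ := hb' t'
          exact ⟨kk, by simpa [hbb] using hkk⟩
      · -- assemble the isomorphism
        have iso1 : M ≅ Lpow (a j) ⊞ M' := by
          refine ⟨biprod.lift β t, biprod.desc α s, ?_, ?_⟩
          · rw [biprod.lift_desc, hts, hqdef]
            abel
          · apply biprod.hom_ext' <;> apply biprod.hom_ext <;>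
              simp [hαβ, hαt, hsβ, hst]
        have iso2 : (Lpow (a j) ⊞ M') ≅
            (Lpow (a j) ⊞ ⨁ fun t' => Lpow (b' t')) :=
          biprod.mapIso (Iso.refl _) ψ
        have iso3 : (Lpow (a j) ⊞ ⨁ fun t' => Lpow (b' t')) ≅
            (Lpow (bb 0) ⊞ ⨁ fun t' : Fin κ' => Lpow (bb t'.succ)) :=
          biprod.mapIso (eqToIso (by simp [hbb]))
            (biproduct.mapIso fun t' => eqToIso (by simp [hbb]))
        exact ⟨iso1 ≪≫ iso2 ≪≫ iso3 ≪≫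
          (stmt18_consIso (fun tt => Lpow (bb tt))).symm⟩

end Stmt18Aux

/-- let `C` be a `ℚ`-linear additive idempotent-complete category and
`L^{⊗r} = Lpow r` objects satisfying Kronecker orthogonality:
`Hom(L^{⊗p}, L^{⊗q}) = 0` for `p ≠ q` and `End(L^{⊗p}) ≅ ℚ`.  If `M` is a direct summand
of `⊕_{r=0}^{d} ⊕_{j=1}^{n} L^{⊗r}`, then `M ≅ ⊕_{r=0}^{d} (L^{⊗r})^{⊕ m_r}` for some
natural numbers `m_r`. -/
theorem stmt18 {C : Type*} [Category C] [Preadditive C] [Linear ℚ C]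
    [HasFiniteBiproducts C] [IsIdempotentComplete C]
    (Lpow : ℕ → C)
    (horth : ∀ p q : ℕ, p ≠ q → ∀ f : Lpow p ⟶ Lpow q, f = 0)
    (hend : ∀ p : ℕ, Nonempty (End (Lpow p) ≃+* ℚ))
    (d n : ℕ) (M : C)
    (i : M ⟶ ⨁ fun x : Fin (d + 1) × Fin n => Lpow (x.1 : ℕ))
    (p : (⨁ fun x : Fin (d + 1) × Fin n => Lpow (x.1 : ℕ)) ⟶ M)
    (hip : i ≫ p = 𝟙 M) :
    ∃ m : Fin (d + 1) → ℕ,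
      Nonempty (M ≅ ⨁ fun x : Σ r : Fin (d + 1), Fin (m r) => Lpow (x.1 : ℕ)) := by
  classical
  obtain ⟨κ, b, hb, ⟨ψ⟩⟩ := stmt18_aux Lpow horth hend
    (Fintype.card (Fin (d + 1) × Fin n)) (Fin (d + 1) × Fin n) rfl
    (fun x => (x.1 : ℕ)) M i p hip
  have hlt : ∀ t, b t < d + 1 := by
    intro t
    obtain ⟨x, hx⟩ := hb t
    rw [hx]
    exact x.1.isLt
  set F : Fin κ → Fin (d + 1) := fun t => ⟨b t, hlt t⟩ with hF
  set m : Fin (d + 1) → ℕ := fun r => Fintype.card {t // F t = r} with hm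
  set e : Fin κ ≃ Σ r : Fin (d + 1), Fin (m r) :=
    (Equiv.sigmaFiberEquiv F).symm.trans
      (Equiv.sigmaCongrRight fun r => Fintype.equivFin {t // F t = r}) with he
  refine ⟨m, ⟨ψ ≪≫ biproduct.whiskerEquiv e ?_⟩⟩
  intro t
  exact eqToIso (by simp [he, hF, Equiv.sigmaFiberEquiv, Equiv.sigmaCongrRight])
end
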